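/- Let A be an n×n matrix over a commutative ring. Then for any scalar z, det(I_n + zA) = ∑_{k=0}^{n} z^k ∑_{1 ≤ i_1 < ... < i_k ≤ n} det(A_{i_1...i_k}), where A_{i_1...i_k} is the principal submatrix of A on rows and columns i_1,...,i_k. -/

import Mathlib

open Matrix

lemma piecewise_det {R : Type*} [CommRing R] {n : ℕ}
    (A : Matrix (Fin n) (Fin n) R) (z : R) (S : Finset (Fin n)) :
    Matrix.det (Matrix.of (S.piecewise (z • A) (1 : Matrix (Fin n) (Fin n) R))) =
      z ^ S.card *
        (A.submatrix (fun i : {x // x ∈ S} => i.val) (fun i : {x // x ∈ S} => i.val)).det := by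
  classical
  let e : {x // x ∈ S} ⊕ {x // x ∉ S} ≃ Fin n := Equiv.sumCompl (· ∈ S)
  have h1 : (Matrix.of (S.piecewise (z • A) (1 : Matrix (Fin n) (Fin n) R))).det =
      ((Matrix.of (S.piecewise (z • A) (1 : Matrix (Fin n) (Fin n) R))).submatrix e e).det :=
    (det_submatrix_equiv_self e _).symm
  have h2 : (Matrix.of (S.piecewise (z • A) (1 : Matrix (Fin n) (Fin n) R))).submatrix e e =
      fromBlocks (z • A.submatrix (fun i : {x // x ∈ S} => i.val) (fun i : {x // x ∈ S} => i.val))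
        ((z • A).submatrix (fun i : {x // x ∈ S} => i.val) (fun i : {x // x ∉ S} => i.val))
        0 ((1 : Matrix (Fin n) (Fin n) R).submatrix
            (fun i : {x // x ∉ S} => i.val) (fun i : {x // x ∉ S} => i.val)) := by
    ext i j
    cases i with
    | inl i =>
      cases j with
      | inl j =>
        simp only [e, submatrix_apply, Equiv.sumCompl_apply_inl, of_apply,
          Finset.piecewise, i.2, ↓reduceIte, fromBlocks_apply₁₁, Matrix.smul_apply]
      | inr j =>
        simp only [e, submatrix_apply, Equiv.sumCompl_apply_inl, Equiv.sumCompl_apply_inr, of_apply,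
          Finset.piecewise, i.2, ↓reduceIte, fromBlocks_apply₁₂]
    | inr i =>
      cases j with
      | inl j =>
        have hij : (i.1 : Fin n) ≠ j.1 := fun h => i.2 (h ▸ j.2)
        simp only [e, submatrix_apply, Equiv.sumCompl_apply_inr, Equiv.sumCompl_apply_inl, of_apply,
          Finset.piecewise, i.2, ↓reduceIte, fromBlocks_apply₂₁, Matrix.zero_apply]
        exact one_apply_ne hij
      | inr j =>
        simp only [e, submatrix_apply, Equiv.sumCompl_apply_inr, of_apply,
          Finset.piecewise, i.2, ↓reduceIte, fromBlocks_apply₂₂]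
  have h3 : ((1 : Matrix (Fin n) (Fin n) R).submatrix
      (fun i : {x // x ∉ S} => i.val) (fun i : {x // x ∉ S} => i.val)) = 1 :=
    submatrix_one _ Subtype.val_injective
  rw [h1, h2, det_fromBlocks_zero₂₁, h3, det_one, mul_one, det_smul, Fintype.card_coe]

theorem det_one_add_smul_eq_sum_principal_minors {R : Type*} [CommRing R] (n : ℕ)
    (A : Matrix (Fin n) (Fin n) R) (z : R) :
    (1 + z • A).det =
      ∑ k ∈ Finset.range (n + 1), z ^ k *
        ∑ S ∈ (Finset.univ : Finset (Fin n)).powersetCard k,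
          (A.submatrix (fun i : {x // x ∈ S} => i.val) (fun i : {x // x ∈ S} => i.val)).det := by
  classical
  have key : (1 + z • A).det =
      ∑ S : Finset (Fin n), Matrix.det (Matrix.of (S.piecewise (z • A) (1 : Matrix (Fin n) (Fin n) R))) := by
    rw [add_comm]
    exact (detRowAlternating : (Fin n → R) [⋀^Fin n]→ₗ[R] R).toMultilinearMap.map_add_univ
      (z • A) (1 : Matrix (Fin n) (Fin n) R)
  rw [key]
  simp_rw [piecewise_det]
  rw [← Finset.powerset_univ, Finset.sum_powerset, Finset.card_univ, Fintype.card_fin]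
  refine Finset.sum_congr rfl fun k _ => ?_
  rw [Finset.mul_sum]
  refine Finset.sum_congr rfl fun S hS => ?_
  rw [(Finset.mem_powersetCard.mp hS).2]
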